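/- Let E be a symmetric Dirichlet form on L²(X,m) with associated norm-capacity cap and energy space 𝔇. Let (fₙ) be a sequence in 𝔇 admitting quasicontinuous representatives, and let f ∈ 𝔇 with ‖fₙ − f‖_𝔇 → 0. Then f admits a quasicontinuous representative, and there is a subsequence of (fₙ) converging to f pointwise quasi everywhere and quasi uniformly; that is, for every ε > 0 there is an open set U ⊆ X with cap(U) ≤ ε such that the subsequence converges to f uniformly on Uᶜ. -/

import Mathlib

open scoped ENNReal
open MeasureTheory
open Filter
set_option linter.unusedSectionVars false
set_option linter.unusedVariables false
set_option maxHeartbeats 1000000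

noncomputable section

variable {X : Type*} [TopologicalSpace X] [MeasurableSpace X] [BorelSpace X]
variable {m : Measure X} [SigmaFinite m]

/-- Convexity for an `ℝ≥0∞`-valued functional on `L²(X,m)`. -/
def IsConvexFunctional (E : Lp ℝ 2 m → ℝ≥0∞) : Prop :=
  ∀ u v : Lp ℝ 2 m, ∀ a b : ℝ, 0 ≤ a → 0 ≤ b → a + b = 1 →
    E (a • u + b • v) ≤ ENNReal.ofReal a * E u + ENNReal.ofReal b * E v

/-- The real function `s ↦ ½((s+α)₊ − (s−α)₋)` appearing in the second defining
inequality of Dirichlet forms. -/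
def medTrunc (α s : ℝ) : ℝ :=
  (max (s + α) 0 - max (-(s - α)) 0) / 2

/-- Cipriani–Grillo: a (nonlinear) Dirichlet form is a convex, lower semicontinuous
functional `E : L²(X,m) → [0,∞]` with dense effective domain satisfying the two
structural inequalities. The second one is stated for any `w ∈ L²` which is an a.e.
representative of `½((u−v+α)₊ − (u−v−α)₋)`. -/
def IsDirichletForm (E : Lp ℝ 2 m → ℝ≥0∞) : Prop :=
  IsConvexFunctional E ∧ LowerSemicontinuous E ∧ Dense {u : Lp ℝ 2 m | E u < ⊤} ∧
  (∀ u v : Lp ℝ 2 m, E (u ⊓ v) + E (u ⊔ v) ≤ E u + E v) ∧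
  (∀ u v w : Lp ℝ 2 m, ∀ α : ℝ, 0 < α →
    (∀ᵐ x ∂m, w x = medTrunc α (u x - v x)) →
    E (v + w) + E (u - w) ≤ E u + E v)

/-- `E` is symmetric: `E 0 = 0` and `E (-u) = E u`. -/
def IsSymmetricFunctional (E : Lp ℝ 2 m → ℝ≥0∞) : Prop :=
  E 0 = 0 ∧ ∀ u : Lp ℝ 2 m, E (-u) = E u

/-- `E₁ u = ‖u‖₂² + E u`. -/
def EOne (E : Lp ℝ 2 m → ℝ≥0∞) (u : Lp ℝ 2 m) : ℝ≥0∞ :=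
  ENNReal.ofReal (‖u‖ ^ 2) + E u

/-- The Luxemburg-type norm `‖u‖_𝔇 = inf {λ > 0 | E₁(u/λ) ≤ 1}`, with `inf ∅ = ∞`. -/
def Dnorm (E : Lp ℝ 2 m → ℝ≥0∞) (u : Lp ℝ 2 m) : ℝ≥0∞ :=
  sInf (ENNReal.ofReal '' {l : ℝ | 0 < l ∧ EOne E (l⁻¹ • u) ≤ 1})

/-- The Dirichlet space `𝔇 = {u ∈ L² | ‖u‖_𝔇 < ∞}`. -/
def Dspace (E : Lp ℝ 2 m → ℝ≥0∞) : Set (Lp ℝ 2 m) :=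
  {u : Lp ℝ 2 m | Dnorm E u < ⊤}

/-- The norm-capacity: `cap A = inf {‖u‖_𝔇 | u ≥ 1 a.e. on an open set U ⊇ A}`
(with `inf ∅ = ∞`). -/
def cap (E : Lp ℝ 2 m → ℝ≥0∞) (A : Set X) : ℝ≥0∞ :=
  sInf (Dnorm E '' {u : Lp ℝ 2 m |
    ∃ U : Set X, IsOpen U ∧ A ⊆ U ∧ ∀ᵐ x ∂m, x ∈ U → 1 ≤ u x})

/-- `f : X → ℝ` is quasicontinuous: for every `ε > 0` there is an open set `O` with
`cap O ≤ ε` such that the restriction of `f` to `Oᶜ` is continuous. -/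
def Quasicontinuous (E : Lp ℝ 2 m → ℝ≥0∞) (f : X → ℝ) : Prop :=
  ∀ ε : ℝ, 0 < ε → ∃ O : Set X, IsOpen O ∧ cap E O ≤ ENNReal.ofReal ε ∧ ContinuousOn f Oᶜ

namespace DF

variable {E : Lp ℝ 2 m → ℝ≥0∞}

lemma norm_sq_convex (u v : Lp ℝ 2 m) {a b : ℝ} (ha : 0 ≤ a) (hb : 0 ≤ b) (hab : a + b = 1) :
    ‖a • u + b • v‖ ^ 2 ≤ a * ‖u‖ ^ 2 + b * ‖v‖ ^ 2 := by
  have h1 : ‖a • u + b • v‖ ≤ a * ‖u‖ + b * ‖v‖ := by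
    calc ‖a • u + b • v‖ ≤ ‖a • u‖ + ‖b • v‖ := norm_add_le _ _
    _ = a * ‖u‖ + b * ‖v‖ := by
        rw [norm_smul, norm_smul, Real.norm_eq_abs, Real.norm_eq_abs, abs_of_nonneg ha,
          abs_of_nonneg hb]
  have h2 : ‖a • u + b • v‖ ^ 2 ≤ (a * ‖u‖ + b * ‖v‖) ^ 2 :=
    pow_le_pow_left₀ (norm_nonneg _) h1 2
  nlinarith [sq_nonneg (‖u‖ - ‖v‖), mul_nonneg ha hb]

lemma EOne_convex (hc : IsConvexFunctional E) (u v : Lp ℝ 2 m) {a b : ℝ}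
    (ha : 0 ≤ a) (hb : 0 ≤ b) (hab : a + b = 1) :
    EOne E (a • u + b • v) ≤ ENNReal.ofReal a * EOne E u + ENNReal.ofReal b * EOne E v := by
  have h2 := hc u v a b ha hb hab
  have h1 : ENNReal.ofReal (‖a • u + b • v‖ ^ 2)
      ≤ ENNReal.ofReal a * ENNReal.ofReal (‖u‖ ^ 2) + ENNReal.ofReal b * ENNReal.ofReal (‖v‖ ^ 2) := by
    rw [← ENNReal.ofReal_mul ha, ← ENNReal.ofReal_mul hb,
      ← ENNReal.ofReal_add (by positivity) (by positivity)]
    exact ENNReal.ofReal_le_ofReal (norm_sq_convex u v ha hb hab)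
  calc EOne E (a • u + b • v)
      ≤ (ENNReal.ofReal a * ENNReal.ofReal (‖u‖ ^ 2) + ENNReal.ofReal b * ENNReal.ofReal (‖v‖ ^ 2))
        + (ENNReal.ofReal a * E u + ENNReal.ofReal b * E v) := add_le_add h1 h2
    _ = ENNReal.ofReal a * EOne E u + ENNReal.ofReal b * EOne E v := by
        unfold EOne; rw [mul_add, mul_add]; ring

lemma EOne_zero (h0 : E 0 = 0) : EOne E (0 : Lp ℝ 2 m) = 0 := by
  simp [EOne, h0]

lemma EOne_smul_le (hc : IsConvexFunctional E) (h0 : E 0 = 0) {c : ℝ} (hc0 : 0 ≤ c) (hc1 : c ≤ 1)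
    (u : Lp ℝ 2 m) : EOne E (c • u) ≤ ENNReal.ofReal c * EOne E u := by
  have := EOne_convex hc u 0 hc0 (by linarith : (0:ℝ) ≤ 1 - c) (by ring)
  simpa [smul_zero, EOne_zero h0] using this

lemma EOne_smul_le' (hc : IsConvexFunctional E) (h0 : E 0 = 0) {c : ℝ} (hc0 : 0 ≤ c) (hc1 : c ≤ 1)
    (u : Lp ℝ 2 m) : EOne E (c • u) ≤ EOne E u := by
  refine (EOne_smul_le hc h0 hc0 hc1 u).trans ?_
  calc ENNReal.ofReal c * EOne E u ≤ 1 * EOne E u := by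
        gcongr; exact ENNReal.ofReal_le_one.2 hc1
    _ = EOne E u := one_mul _

lemma EOne_neg (hsymE : ∀ u : Lp ℝ 2 m, E (-u) = E u) (u : Lp ℝ 2 m) :
    EOne E (-u) = EOne E u := by
  simp [EOne, hsymE]

lemma Dnorm_le_of_mem {u : Lp ℝ 2 m} {l : ℝ} (hl : 0 < l) (h : EOne E (l⁻¹ • u) ≤ 1) :
    Dnorm E u ≤ ENNReal.ofReal l :=
  sInf_le ⟨l, ⟨hl, h⟩, rfl⟩

lemma mem_of_mem_of_le (hc : IsConvexFunctional E) (h0 : E 0 = 0) {u : Lp ℝ 2 m} {l l' : ℝ}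
    (hl : 0 < l) (h : EOne E (l⁻¹ • u) ≤ 1) (hll' : l ≤ l') :
    EOne E (l'⁻¹ • u) ≤ 1 := by
  have hl' : 0 < l' := lt_of_lt_of_le hl hll'
  have heq : l'⁻¹ • u = (l / l') • (l⁻¹ • u) := by
    rw [smul_smul]; congr 1
    field_simp
  rw [heq]
  refine le_trans (EOne_smul_le' hc h0 (by positivity) ?_ _) h
  rw [div_le_one hl']; exact hll'

lemma EOne_le_one_of_Dnorm_lt (hc : IsConvexFunctional E) (h0 : E 0 = 0) {u : Lp ℝ 2 m} {l : ℝ}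
    (hl : 0 < l) (h : Dnorm E u < ENNReal.ofReal l) : EOne E (l⁻¹ • u) ≤ 1 := by
  obtain ⟨a, ⟨b, ⟨hb0, hbE⟩, rfl⟩, hab⟩ := sInf_lt_iff.mp h
  exact mem_of_mem_of_le hc h0 hb0 hbE (le_of_lt ((ENNReal.ofReal_lt_ofReal_iff hl).mp hab))

lemma Dnorm_zero (h0 : E 0 = 0) : Dnorm E (0 : Lp ℝ 2 m) = 0 := by
  refine le_antisymm (ENNReal.le_of_forall_pos_le_add fun ε hε _ => ?_) zero_le
  rw [zero_add]
  have : EOne E ((((ε:ℝ))⁻¹ : ℝ) • (0 : Lp ℝ 2 m)) ≤ 1 := by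
    rw [smul_zero, EOne_zero h0]; exact zero_le
  simpa using Dnorm_le_of_mem (by exact_mod_cast hε) this


lemma Dnorm_neg (hsymE : ∀ u : Lp ℝ 2 m, E (-u) = E u) (u : Lp ℝ 2 m) :
    Dnorm E (-u) = Dnorm E u := by
  unfold Dnorm
  congr 1
  ext l
  simp [smul_neg, EOne_neg hsymE]

lemma le_sInf_add_sInf {A B : Set ℝ≥0∞} {c : ℝ≥0∞} (h : ∀ a ∈ A, ∀ b ∈ B, c ≤ a + b) :
    c ≤ sInf A + sInf B := by
  rw [ENNReal.sInf_add]
  refine le_iInf₂ fun a ha => ?_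
  rw [add_comm, ENNReal.sInf_add]
  refine le_iInf₂ fun b hb => ?_
  rw [add_comm]
  exact h a ha b hb

lemma Dnorm_add_le (hc : IsConvexFunctional E) (h0 : E 0 = 0) (u v : Lp ℝ 2 m) :
    Dnorm E (u + v) ≤ Dnorm E u + Dnorm E v := by
  refine le_sInf_add_sInf ?_
  rintro _ ⟨a, ⟨ha0, haE⟩, rfl⟩ _ ⟨b, ⟨hb0, hbE⟩, rfl⟩
  rw [← ENNReal.ofReal_add ha0.le hb0.le]
  have hab : 0 < a + b := by linarith
  refine Dnorm_le_of_mem hab ?_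
  have heq : (a + b)⁻¹ • (u + v) = (a / (a + b)) • (a⁻¹ • u) + (b / (a + b)) • (b⁻¹ • v) := by
    rw [smul_smul, smul_smul, smul_add]
    congr 2 <;> field_simp
  rw [heq]
  calc EOne E _ ≤ ENNReal.ofReal (a / (a+b)) * EOne E (a⁻¹ • u)
        + ENNReal.ofReal (b / (a+b)) * EOne E (b⁻¹ • v) :=
      EOne_convex hc _ _ (by positivity) (by positivity) (by field_simp)
    _ ≤ ENNReal.ofReal (a / (a+b)) * 1 + ENNReal.ofReal (b / (a+b)) * 1 := by gcongr
    _ = 1 := by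
        rw [mul_one, mul_one, ← ENNReal.ofReal_add (by positivity) (by positivity)]
        rw [← add_div, div_self hab.ne']
        simp

lemma Dnorm_smul_le (hc : IsConvexFunctional E) (h0 : E 0 = 0) {c : ℝ} (hc0 : 0 < c)
    (u : Lp ℝ 2 m) : Dnorm E (c • u) ≤ ENNReal.ofReal c * Dnorm E u := by
  have key : ∀ l : ℝ, 0 < l → EOne E (l⁻¹ • u) ≤ 1 →
      Dnorm E (c • u) ≤ ENNReal.ofReal c * ENNReal.ofReal l := by
    intro l hl hE1
    rw [← ENNReal.ofReal_mul hc0.le]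
    refine Dnorm_le_of_mem (by positivity) ?_
    have : (c * l)⁻¹ • (c • u) = l⁻¹ • u := by
      rw [smul_smul, mul_inv]
      congr 1
      field_simp
    rwa [this]
  -- conclude via sInf
  conv_rhs => rw [Dnorm]
  set A := ENNReal.ofReal '' {l : ℝ | 0 < l ∧ EOne E (l⁻¹ • u) ≤ 1} with hA
  rcases A.eq_empty_or_nonempty with hAe | hAne
  · rw [hAe, sInf_empty, ENNReal.mul_top (by simp [hc0])]
    exact le_top
  · have : Nonempty A := hAne.to_subtype
    rw [sInf_eq_iInf', ENNReal.mul_iInf' (fun h => absurd h (by simp)) (fun _ => this)]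
    refine le_iInf fun x => ?_
    obtain ⟨l, ⟨hl0, hl1⟩, hlx⟩ := x.2
    rw [← hlx]
    exact key l hl0 hl1


lemma ofReal_norm_le_Dnorm (u : Lp ℝ 2 m) : ENNReal.ofReal ‖u‖ ≤ Dnorm E u := by
  refine le_sInf ?_
  rintro _ ⟨l, ⟨hl0, hl1⟩, rfl⟩
  refine ENNReal.ofReal_le_ofReal ?_
  have h1 : ENNReal.ofReal (‖l⁻¹ • u‖ ^ 2) ≤ 1 := le_trans (le_add_right le_rfl) hl1
  have h2 : ‖l⁻¹ • u‖ ^ 2 ≤ 1 := by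
    have := ENNReal.ofReal_le_one.mp h1
    linarith [this]
  have h3 : ‖l⁻¹ • u‖ ≤ 1 := by nlinarith [norm_nonneg (l⁻¹ • u)]
  rw [norm_smul, Real.norm_eq_abs, abs_of_nonneg (by positivity : (0:ℝ) ≤ l⁻¹)] at h3
  calc ‖u‖ = l * (l⁻¹ * ‖u‖) := by field_simp
    _ ≤ l * 1 := by
        refine mul_le_mul_of_nonneg_left h3 hl0.le
    _ = l := mul_one l

lemma le_of_lsc_of_tendsto {f : Lp ℝ 2 m → ℝ≥0∞} (hf : LowerSemicontinuous f)
    {z : ℕ → Lp ℝ 2 m} {w : Lp ℝ 2 m} {C : ℝ≥0∞}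
    (hz : Tendsto z atTop (nhds w)) (h : ∀ n, f (z n) ≤ C) : f w ≤ C := by
  by_contra hlt
  push_neg at hlt
  have := hf w C hlt
  obtain ⟨n, hn⟩ := (hz.eventually this).exists
  exact absurd (h n) (not_le.mpr hn)

lemma EOne_lsc (hlsc : LowerSemicontinuous E) : LowerSemicontinuous (EOne E) := by
  have hcont : Continuous fun u : Lp ℝ 2 m => ENNReal.ofReal (‖u‖ ^ 2) :=
    ENNReal.continuous_ofReal.comp ((continuous_norm).pow 2)
  exact hcont.lowerSemicontinuous.add hlsc

lemma Dnorm_le_of_tendsto (hc : IsConvexFunctional E) (h0 : E 0 = 0)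
    (hlsc : LowerSemicontinuous E) {z : ℕ → Lp ℝ 2 m} {w : Lp ℝ 2 m} {C : ℝ≥0∞}
    (hz : Tendsto z atTop (nhds w)) (h : ∀ n, Dnorm E (z n) ≤ C) : Dnorm E w ≤ C := by
  refine ENNReal.le_of_forall_pos_le_add fun ε hε hC => ?_
  set l : ℝ := (C + ε).toReal with hl
  have hCe : C + (ε:ℝ≥0∞) ≠ ⊤ := by
    exact ENNReal.add_ne_top.mpr ⟨hC.ne, by simp⟩
  have hl0 : 0 < l := by
    rw [hl]
    refine ENNReal.toReal_pos ?_ hCe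
    simp [hε.ne']
  have hofl : ENNReal.ofReal l = C + ε := by rw [hl, ENNReal.ofReal_toReal hCe]
  have hmem : ∀ n, EOne E (l⁻¹ • z n) ≤ 1 := by
    intro n
    refine EOne_le_one_of_Dnorm_lt hc h0 hl0 ?_
    rw [hofl]
    exact lt_of_le_of_lt (h n) (ENNReal.lt_add_right hC.ne (by simp [hε.ne']))
  have htend : Tendsto (fun n => l⁻¹ • z n) atTop (nhds (l⁻¹ • w)) := hz.const_smul _
  have := le_of_lsc_of_tendsto (EOne_lsc hlsc) htend hmem
  rw [← hofl]
  exact Dnorm_le_of_mem hl0 this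

lemma Dnorm_sum_le (hc : IsConvexFunctional E) (h0 : E 0 = 0) (v : ℕ → Lp ℝ 2 m)
    (s : Finset ℕ) : Dnorm E (∑ i ∈ s, v i) ≤ ∑ i ∈ s, Dnorm E (v i) := by
  classical
  induction s using Finset.induction with
  | empty => simp [Dnorm_zero h0]
  | insert a s' hx ih =>
    rw [Finset.sum_insert hx, Finset.sum_insert hx]
    exact le_trans (Dnorm_add_le hc h0 _ _) (add_le_add le_rfl ih)

/-! ### Positive part -/

lemma coeFn_posPart (u : Lp ℝ 2 m) : ∀ᵐ x ∂m, (u ⊔ 0) x = max (u x) 0 := by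
  filter_upwards [Lp.coeFn_sup u 0, Lp.coeFn_zero (E := ℝ) (p := 2) (μ := m)] with x h1 h2
  rw [h1, Pi.sup_apply, h2, Pi.zero_apply]

lemma norm_le_of_ae_le {u v : Lp ℝ 2 m} (h : ∀ᵐ x ∂m, ‖u x‖ ≤ ‖v x‖) : ‖u‖ ≤ ‖v‖ := by
  rw [Lp.norm_def, Lp.norm_def]
  exact ENNReal.toReal_mono (Lp.eLpNorm_ne_top v) (eLpNorm_mono_ae h)

lemma norm_posPart_le (u : Lp ℝ 2 m) : ‖u ⊔ 0‖ ≤ ‖u‖ := by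
  refine norm_le_of_ae_le ?_
  filter_upwards [coeFn_posPart u] with x h1
  rw [h1]
  simp only [Real.norm_eq_abs]
  rcases le_or_gt (u x) 0 with h | h
  · rw [max_eq_right h]; simp [abs_nonneg]
  · rw [max_eq_left h.le]

lemma smul_posPart {c : ℝ} (hc : 0 ≤ c) (u : Lp ℝ 2 m) :
    c • (u ⊔ 0) = (c • u) ⊔ 0 := by
  refine Lp.ext ?_
  filter_upwards [coeFn_posPart u, coeFn_posPart (c • u), Lp.coeFn_smul c u,
    Lp.coeFn_smul c (u ⊔ 0)] with x h1 h2 h3 h4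
  rw [h4, Pi.smul_apply, h1, h2, h3, Pi.smul_apply]
  simp only [smul_eq_mul]
  rw [mul_max_of_nonneg _ _ hc, mul_zero]

lemma E_posPart_le (hlat : ∀ u v : Lp ℝ 2 m, E (u ⊓ v) + E (u ⊔ v) ≤ E u + E v)
    (h0 : E 0 = 0) (u : Lp ℝ 2 m) : E (u ⊔ 0) ≤ E u := by
  have := hlat u 0
  rw [h0, add_zero] at this
  exact le_trans le_add_self this

lemma EOne_posPart_le (hlat : ∀ u v : Lp ℝ 2 m, E (u ⊓ v) + E (u ⊔ v) ≤ E u + E v)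
    (h0 : E 0 = 0) (u : Lp ℝ 2 m) : EOne E (u ⊔ 0) ≤ EOne E u := by
  refine add_le_add ?_ (E_posPart_le hlat h0 u)
  refine ENNReal.ofReal_le_ofReal ?_
  have := norm_posPart_le u
  nlinarith [norm_nonneg (u ⊔ 0)]

lemma Dnorm_posPart_le (hlat : ∀ u v : Lp ℝ 2 m, E (u ⊓ v) + E (u ⊔ v) ≤ E u + E v)
    (h0 : E 0 = 0) (u : Lp ℝ 2 m) : Dnorm E (u ⊔ 0) ≤ Dnorm E u := by
  refine sInf_le_sInf ?_
  rintro _ ⟨l, ⟨hl0, hl1⟩, rfl⟩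
  refine ⟨l, ⟨hl0, ?_⟩, rfl⟩
  rw [smul_posPart (by positivity) u]
  exact le_trans (EOne_posPart_le hlat h0 _) hl1


/-! ### Lp convergence helpers -/

lemma exists_ae_tendsto {v : ℕ → Lp ℝ 2 m} {w : Lp ℝ 2 m}
    (hv : Tendsto v atTop (nhds w)) :
    ∃ ns : ℕ → ℕ, StrictMono ns ∧
      ∀ᵐ x ∂m, Tendsto (fun i => v (ns i) x) atTop (nhds (w x)) := by
  have hmeas : ∀ n, AEStronglyMeasurable (fun x => v n x) m := fun n =>
    (Lp.aestronglyMeasurable (v n))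
  have hmw : AEStronglyMeasurable (fun x => w x) m := Lp.aestronglyMeasurable w
  have htim : TendstoInMeasure m (fun n x => v n x) atTop (fun x => w x) := by
    refine tendstoInMeasure_of_tendsto_eLpNorm (p := 2) (by norm_num) hmeas hmw ?_
    have heq : ∀ n, eLpNorm ((fun x => v n x) - fun x => w x) 2 m
        = ENNReal.ofReal ‖v n - w‖ := by
      intro n
      rw [Lp.norm_def, ENNReal.ofReal_toReal (Lp.eLpNorm_ne_top _)]
      refine eLpNorm_congr_ae ?_
      filter_upwards [Lp.coeFn_sub (v n) w] with x hx
      rw [hx, Pi.sub_apply]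
    simp only [heq]
    rw [← ENNReal.ofReal_zero]
    refine (ENNReal.continuous_ofReal.tendsto 0).comp ?_
    exact tendsto_iff_norm_sub_tendsto_zero.mp hv
  exact htim.exists_seq_tendsto_ae

lemma ae_nonneg_of_tendsto {v : ℕ → Lp ℝ 2 m} {w : Lp ℝ 2 m}
    (hv : Tendsto v atTop (nhds w)) (h : ∀ᶠ j in atTop, ∀ᵐ x ∂m, 0 ≤ v j x) :
    ∀ᵐ x ∂m, 0 ≤ w x := by
  obtain ⟨ns, hns, hae⟩ := exists_ae_tendsto hv
  obtain ⟨N, hN⟩ := eventually_atTop.mp h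
  have hall : ∀ᵐ x ∂m, ∀ j, N ≤ j → 0 ≤ v j x := by
    rw [MeasureTheory.ae_all_iff]
    intro j
    by_cases hj : N ≤ j
    · filter_upwards [hN j hj] with x hx
      intro _; exact hx
    · filter_upwards with x hx
      exact absurd hx hj
  filter_upwards [hae, hall] with x hx hxall
  refine ge_of_tendsto hx ?_
  have : Tendsto ns atTop atTop := hns.tendsto_atTop
  filter_upwards [this.eventually (eventually_ge_atTop N)] with i hi
  exact hxall (ns i) hi

lemma coeFn_sum (v : ℕ → Lp ℝ 2 m) (s : Finset ℕ) :
    ∀ᵐ x ∂m, (∑ i ∈ s, v i) x = ∑ i ∈ s, v i x := by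
  classical
  induction s using Finset.induction with
  | empty => filter_upwards [Lp.coeFn_zero (E := ℝ) (p := 2) (μ := m)] with x hx; simpa using hx
  | insert a s' hx ih =>
    filter_upwards [Lp.coeFn_add (v a) (∑ i ∈ s', v i), ih] with x h1 h2
    rw [Finset.sum_insert hx, Finset.sum_insert hx, h1, Pi.add_apply, h2]


/-! ### Capacity -/

lemma cap_mono {A B : Set X} (h : A ⊆ B) : cap E A ≤ cap E B := by
  refine sInf_le_sInf (Set.image_mono ?_)
  rintro u ⟨U, hU, hBU, hae⟩
  exact ⟨U, hU, h.trans hBU, hae⟩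

lemma cap_le_Dnorm {A : Set X} {u : Lp ℝ 2 m} {U : Set X} (hU : IsOpen U) (hAU : A ⊆ U)
    (hae : ∀ᵐ x ∂m, x ∈ U → 1 ≤ u x) : cap E A ≤ Dnorm E u :=
  sInf_le ⟨u, ⟨U, hU, hAU, hae⟩, rfl⟩

lemma exists_admissible {A : Set X} {c : ℝ≥0∞} (h : cap E A < c) :
    ∃ u : Lp ℝ 2 m, ∃ U : Set X, IsOpen U ∧ A ⊆ U ∧ (∀ᵐ x ∂m, x ∈ U → 1 ≤ u x) ∧
      Dnorm E u < c := by
  obtain ⟨_, ⟨u, ⟨U, hU, hAU, hae⟩, rfl⟩, hd⟩ := sInf_lt_iff.mp h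
  exact ⟨u, U, hU, hAU, hae, hd⟩

lemma posPart_admissible {u : Lp ℝ 2 m} {U : Set X} (hae : ∀ᵐ x ∂m, x ∈ U → 1 ≤ u x) :
    (∀ᵐ x ∂m, x ∈ U → 1 ≤ (u ⊔ 0) x) ∧ (∀ᵐ x ∂m, 0 ≤ (u ⊔ 0) x) := by
  constructor
  · filter_upwards [hae, coeFn_posPart u] with x h1 h2 hx
    rw [h2]
    exact le_max_of_le_left (h1 hx)
  · filter_upwards [coeFn_posPart u] with x h2
    rw [h2]
    exact le_max_right _ _

lemma cap_union_le (hc : IsConvexFunctional E) (h0 : E 0 = 0)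
    (hlat : ∀ u v : Lp ℝ 2 m, E (u ⊓ v) + E (u ⊔ v) ≤ E u + E v) (A B : Set X) :
    cap E (A ∪ B) ≤ cap E A + cap E B := by
  refine le_sInf_add_sInf ?_
  rintro _ ⟨u, ⟨U, hU, hAU, haeu⟩, rfl⟩ _ ⟨v, ⟨V, hV, hBV, haev⟩, rfl⟩
  have h1 := (posPart_admissible haeu).1
  have h2 := (posPart_admissible haev).1
  have h1' := (posPart_admissible haeu).2
  have h2' := (posPart_admissible haev).2
  have hadm : ∀ᵐ x ∂m, x ∈ U ∪ V → 1 ≤ ((u ⊔ 0) + (v ⊔ 0)) x := by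
    filter_upwards [h1, h2, h1', h2', Lp.coeFn_add (u ⊔ 0) (v ⊔ 0)] with x g1 g2 g1' g2' gadd hx
    rw [gadd, Pi.add_apply]
    rcases hx with hx | hx
    · linarith [g1 hx, g2']
    · linarith [g2 hx, g1']
  calc cap E (A ∪ B) ≤ Dnorm E ((u ⊔ 0) + (v ⊔ 0)) :=
      cap_le_Dnorm (hU.union hV) (Set.union_subset_union hAU hBV) hadm
    _ ≤ Dnorm E (u ⊔ 0) + Dnorm E (v ⊔ 0) := Dnorm_add_le hc h0 _ _
    _ ≤ Dnorm E u + Dnorm E v :=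
      add_le_add (Dnorm_posPart_le hlat h0 u) (Dnorm_posPart_le hlat h0 v)

lemma cap_iUnion_le (hc : IsConvexFunctional E) (h0 : E 0 = 0)
    (hlat : ∀ u v : Lp ℝ 2 m, E (u ⊓ v) + E (u ⊔ v) ≤ E u + E v)
    (hlsc : LowerSemicontinuous E) (A : ℕ → Set X) :
    cap E (⋃ n, A n) ≤ ∑' n, cap E (A n) := by
  set S := ∑' n, cap E (A n) with hS
  refine ENNReal.le_of_forall_pos_le_add fun ε hε hStop => ?_
  have hfin : ∀ n, cap E (A n) < ⊤ := fun n =>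
    lt_of_le_of_lt (ENNReal.le_tsum n) hStop
  obtain ⟨δ, hδpos, hδsum⟩ := ENNReal.exists_pos_sum_of_countable
    (ε := (ε : ℝ≥0∞)) (by simp [hε.ne']) ℕ
  -- choose admissible functions
  have hchoice : ∀ n, ∃ u : Lp ℝ 2 m, ∃ U : Set X, IsOpen U ∧ A n ⊆ U ∧
      (∀ᵐ x ∂m, x ∈ U → 1 ≤ u x) ∧ Dnorm E u < cap E (A n) + δ n := by
    intro n
    refine exists_admissible ?_
    exact ENNReal.lt_add_right (hfin n).ne (by simpa using (hδpos n).ne')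
  choose u U hUopen hAU haeU hDu using hchoice
  set h : ℕ → Lp ℝ 2 m := fun n => u n ⊔ 0 with hh
  have hDh : ∀ n, Dnorm E (h n) < cap E (A n) + δ n := fun n =>
    lt_of_le_of_lt (Dnorm_posPart_le hlat h0 (u n)) (hDu n)
  set c : ℕ → ℝ≥0∞ := fun n => cap E (A n) + δ n with hcdef
  have hcsum : ∑' n, c n ≤ S + ε := by
    rw [ENNReal.tsum_add]
    exact add_le_add le_rfl hδsum.le
  have hcfin : ∑' n, c n ≠ ⊤ := by
    refine ne_top_of_le_ne_top ?_ hcsum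
    exact ENNReal.add_ne_top.mpr ⟨hStop.ne, by simp⟩
  -- summability in L²
  have hnorm : ∀ n, ‖h n‖ ≤ (c n).toReal := by
    intro n
    have h1 : ENNReal.ofReal ‖h n‖ ≤ c n := le_trans (ofReal_norm_le_Dnorm _) (hDh n).le
    calc ‖h n‖ = (ENNReal.ofReal ‖h n‖).toReal := by
          rw [ENNReal.toReal_ofReal (norm_nonneg _)]
      _ ≤ (c n).toReal := ENNReal.toReal_mono (by
          exact ne_top_of_le_ne_top hcfin (ENNReal.le_tsum n)) h1
  have hsummable : Summable h := by
    refine Summable.of_norm (Summable.of_nonneg_of_le (fun n => norm_nonneg _) hnorm ?_)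
    exact ENNReal.summable_toReal hcfin
  set w : Lp ℝ 2 m := ∑' n, h n with hw
  have htendsto : Tendsto (fun N => ∑ i ∈ Finset.range N, h i) atTop (nhds w) :=
    hsummable.hasSum.tendsto_sum_nat
  -- Dnorm bound
  have hDw : Dnorm E w ≤ S + ε := by
    refine Dnorm_le_of_tendsto hc h0 hlsc htendsto fun N => ?_
    calc Dnorm E (∑ i ∈ Finset.range N, h i) ≤ ∑ i ∈ Finset.range N, Dnorm E (h i) :=
        Dnorm_sum_le hc h0 h (Finset.range N)
      _ ≤ ∑ i ∈ Finset.range N, c i := Finset.sum_le_sum fun i _ => (hDh i).le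
      _ ≤ ∑' n, c n := ENNReal.sum_le_tsum _
      _ ≤ S + ε := hcsum
  -- w dominates each h n a.e.
  have hwge : ∀ n, ∀ᵐ x ∂m, h n x ≤ w x := by
    intro n
    have hsub : Tendsto (fun N => (∑ i ∈ Finset.range N, h i) - h n) atTop (nhds (w - h n)) :=
      htendsto.sub tendsto_const_nhds
    have : ∀ᵐ x ∂m, 0 ≤ (w - h n) x := by
      refine ae_nonneg_of_tendsto hsub ?_
      filter_upwards [eventually_ge_atTop (n + 1)] with N hN
      have hposs : ∀ᵐ x ∂m, ∀ i, 0 ≤ h i x := by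
        rw [MeasureTheory.ae_all_iff]
        intro i
        exact (posPart_admissible (haeU i)).2
      filter_upwards [hposs, Lp.coeFn_sub (∑ i ∈ Finset.range N, h i) (h n),
        coeFn_sum h (Finset.range N)] with x hpos hsx hsum
      rw [hsx, Pi.sub_apply, hsum]
      have hmem : n ∈ Finset.range N := Finset.mem_range.mpr hN
      have : h n x ≤ ∑ i ∈ Finset.range N, h i x :=
        Finset.single_le_sum (fun i _ => hpos i) hmem
      linarith
    filter_upwards [this, Lp.coeFn_sub w (h n)] with x h1 h2
    rw [h2, Pi.sub_apply] at h1
    linarith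
  -- admissibility of w on ⋃ U n
  have hadm : ∀ᵐ x ∂m, x ∈ ⋃ n, U n → 1 ≤ w x := by
    have h1 : ∀ᵐ x ∂m, ∀ n, x ∈ U n → 1 ≤ h n x := by
      rw [MeasureTheory.ae_all_iff]
      exact fun n => (posPart_admissible (haeU n)).1
    have h2 : ∀ᵐ x ∂m, ∀ n, h n x ≤ w x := by
      rw [MeasureTheory.ae_all_iff]; exact hwge
    filter_upwards [h1, h2] with x hx1 hx2 hx
    obtain ⟨n, hn⟩ := Set.mem_iUnion.mp hx
    exact le_trans (hx1 n hn) (hx2 n)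
  calc cap E (⋃ n, A n) ≤ Dnorm E w :=
      cap_le_Dnorm (isOpen_iUnion hUopen) (Set.iUnion_mono hAU) hadm
    _ ≤ S + ε := hDw


/-! ### Measure bound -/

lemma meas_le_sq_norm {V : Set X} (hV : MeasurableSet V) {u : Lp ℝ 2 m}
    (h : ∀ᵐ x ∂m, x ∈ V → 1 ≤ u x) : m V ≤ (ENNReal.ofReal ‖u‖) ^ 2 := by
  have h1 : m V = ∫⁻ x in V, 1 ∂m := (setLIntegral_one V).symm
  have h2 : ∫⁻ x in V, 1 ∂m ≤ ∫⁻ x in V, (‖u x‖₊ : ℝ≥0∞) ^ 2 ∂m := by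
    refine lintegral_mono_ae ?_
    rw [ae_restrict_iff' hV]
    filter_upwards [h] with x hx hxV
    have : (1:ℝ) ≤ |u x| := le_trans (hx hxV) (le_abs_self _)
    have h3 : (1:ℝ≥0∞) ≤ (‖u x‖₊ : ℝ≥0∞) := by
      rw [ENNReal.one_le_coe_iff]
      rw [← NNReal.coe_le_coe]
      simpa [Real.norm_eq_abs] using this
    calc (1:ℝ≥0∞) = 1 ^ 2 := (one_pow 2).symm
      _ ≤ (‖u x‖₊ : ℝ≥0∞) ^ 2 := pow_le_pow_left₀ zero_le_one h3 2
  have h3 : ∫⁻ x in V, (‖u x‖₊ : ℝ≥0∞) ^ 2 ∂m ≤ ∫⁻ x, (‖u x‖₊ : ℝ≥0∞) ^ 2 ∂m :=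
    setLIntegral_le_lintegral _ _
  have h4 : (eLpNorm (⇑u) 2 m) ^ 2 = ∫⁻ x, (‖u x‖₊ : ℝ≥0∞) ^ 2 ∂m := by
    rw [eLpNorm_eq_lintegral_rpow_enorm_toReal (by norm_num) (by norm_num)]
    rw [← ENNReal.rpow_natCast _ 2, ← ENNReal.rpow_mul]
    norm_num
    simp only [enorm_eq_nnnorm]
  have h5 : eLpNorm (⇑u) 2 m = ENNReal.ofReal ‖u‖ := by
    rw [Lp.norm_def, ENNReal.ofReal_toReal (Lp.eLpNorm_ne_top u)]
  calc m V = ∫⁻ x in V, 1 ∂m := h1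
    _ ≤ ∫⁻ x in V, (‖u x‖₊ : ℝ≥0∞) ^ 2 ∂m := h2
    _ ≤ ∫⁻ x, (‖u x‖₊ : ℝ≥0∞) ^ 2 ∂m := h3
    _ = (eLpNorm (⇑u) 2 m) ^ 2 := h4.symm
    _ = (ENNReal.ofReal ‖u‖) ^ 2 := by rw [h5]

/-! ### Quasicontinuity -/

lemma Quasicontinuous.neg' {f : X → ℝ} (h : Quasicontinuous E f) :
    Quasicontinuous E (fun x => - f x) := by
  intro ε hε
  obtain ⟨O, hO, hcap, hcont⟩ := h ε hε
  exact ⟨O, hO, hcap, hcont.neg⟩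

lemma Quasicontinuous.sub' (hc : IsConvexFunctional E) (h0 : E 0 = 0)
    (hlat : ∀ u v : Lp ℝ 2 m, E (u ⊓ v) + E (u ⊔ v) ≤ E u + E v)
    {f g : X → ℝ} (hf : Quasicontinuous E f) (hg : Quasicontinuous E g) :
    Quasicontinuous E (fun x => f x - g x) := by
  intro ε hε
  obtain ⟨O1, hO1, hcap1, hcont1⟩ := hf (ε/2) (by linarith)
  obtain ⟨O2, hO2, hcap2, hcont2⟩ := hg (ε/2) (by linarith)
  refine ⟨O1 ∪ O2, hO1.union hO2, ?_, ?_⟩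
  · calc cap E (O1 ∪ O2) ≤ cap E O1 + cap E O2 := cap_union_le hc h0 hlat _ _
      _ ≤ ENNReal.ofReal (ε/2) + ENNReal.ofReal (ε/2) := add_le_add hcap1 hcap2
      _ = ENNReal.ofReal ε := by
          rw [← ENNReal.ofReal_add (by linarith) (by linarith)]
          norm_num
  · rw [Set.compl_union]
    exact (hcont1.mono Set.inter_subset_left).sub (hcont2.mono Set.inter_subset_right)

/-! ### Chebyshev inequality for capacity -/

lemma cap_setOf_lt_le (hc : IsConvexFunctional E) (h0 : E 0 = 0)
    (hlat : ∀ u v : Lp ℝ 2 m, E (u ⊓ v) + E (u ⊔ v) ≤ E u + E v)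
    {u : Lp ℝ 2 m} {g : X → ℝ} (hqc : Quasicontinuous E g)
    (hrep : ∀ᵐ x ∂m, u x = g x) {lam ε : ℝ} (hlam : 0 < lam) (hε : 0 < ε) :
    cap E {x | lam < g x} ≤ Dnorm E (lam⁻¹ • u) + ENNReal.ofReal ε := by
  obtain ⟨O, hOopen, hOcap, hOcont⟩ := hqc (ε/2) (by linarith)
  -- relative openness of {lam < g} in Oᶜ
  have hrestr : Continuous fun y : (Oᶜ : Set X) => g y :=
    continuousOn_iff_continuous_restrict.mp hOcont
  have hopen : IsOpen ((fun y : (Oᶜ : Set X) => g y) ⁻¹' Set.Ioi lam) :=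
    isOpen_Ioi.preimage hrestr
  rw [isOpen_induced_iff] at hopen
  obtain ⟨W, hWopen, hW⟩ := hopen
  have hWiff : ∀ x (hx : x ∈ Oᶜ), x ∈ W ↔ lam < g x := by
    intro x hx
    constructor
    · intro hxW
      have : (⟨x, hx⟩ : (Oᶜ : Set X)) ∈ Subtype.val ⁻¹' W := hxW
      rw [hW] at this
      exact this
    · intro hlt
      have : (⟨x, hx⟩ : (Oᶜ : Set X)) ∈ (fun y : (Oᶜ : Set X) => g y) ⁻¹' Set.Ioi lam := hlt
      rw [← hW] at this
      exact this
  -- admissible function for O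
  have hOlt : cap E O < ENNReal.ofReal ε :=
    lt_of_le_of_lt hOcap (ENNReal.ofReal_lt_ofReal_iff hε |>.mpr (by linarith))
  obtain ⟨v, V, hVopen, hOV, haeV, hDv⟩ := exists_admissible hOlt
  set w : Lp ℝ 2 m := ((lam⁻¹ • u) ⊔ 0) + (v ⊔ 0) with hwdef
  have hsubset : {x | lam < g x} ⊆ W ∪ V := by
    intro x hx
    by_cases hxO : x ∈ O
    · exact Or.inr (hOV hxO)
    · exact Or.inl ((hWiff x hxO).mpr hx)
  have hadm : ∀ᵐ x ∂m, x ∈ W ∪ V → 1 ≤ w x := by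
    filter_upwards [hrep, (posPart_admissible haeV).1, (posPart_admissible haeV).2,
      coeFn_posPart (lam⁻¹ • u), Lp.coeFn_smul (lam⁻¹ : ℝ) u,
      Lp.coeFn_add ((lam⁻¹ • u) ⊔ 0) (v ⊔ 0)] with x h1 h2 h3 h4 h5 h6 hx
    rw [h6, Pi.add_apply, h4, h5, Pi.smul_apply, smul_eq_mul]
    have hpos : (0:ℝ) ≤ max (lam⁻¹ * u x) 0 := le_max_right _ _
    by_cases hxV : x ∈ V
    · have := h2 hxV
      linarith [hpos]
    · have hxW : x ∈ W := hx.resolve_right hxV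
      have hxO : x ∈ Oᶜ := fun hxO => hxV (hOV hxO)
      have hgx : lam < g x := (hWiff x hxO).mp hxW
      have hux : lam < u x := by rw [h1]; exact hgx
      have h7 : 1 ≤ lam⁻¹ * u x := by
        rw [← inv_mul_cancel₀ hlam.ne']
        exact mul_le_mul_of_nonneg_left hux.le (by positivity)
      have := h3
      have h8 : (1:ℝ) ≤ max (lam⁻¹ * u x) 0 := le_max_of_le_left h7
      linarith
  calc cap E {x | lam < g x} ≤ Dnorm E w :=
      cap_le_Dnorm (hWopen.union hVopen) hsubset hadm
    _ ≤ Dnorm E ((lam⁻¹ • u) ⊔ 0) + Dnorm E (v ⊔ 0) := Dnorm_add_le hc h0 _ _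
    _ ≤ Dnorm E (lam⁻¹ • u) + Dnorm E v :=
        add_le_add (Dnorm_posPart_le hlat h0 _) (Dnorm_posPart_le hlat h0 _)
    _ ≤ Dnorm E (lam⁻¹ • u) + ENNReal.ofReal ε := add_le_add le_rfl hDv.le


end DF

/-- If `fₙ → f` in `𝔇` and each `fₙ` has a quasicontinuous representative, then `f` has a
quasicontinuous representative and a subsequence converges to it pointwise quasi everywhere
and quasi uniformly. -/
theorem quasicontinuous_limit
    (hsupp : ∀ U : Set X, IsOpen U → U.Nonempty → 0 < m U)
    (E : Lp ℝ 2 m → ℝ≥0∞) (hE : IsDirichletForm E) (hsym : IsSymmetricFunctional E)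
    (F : ℕ → Lp ℝ 2 m) (hF : ∀ n, F n ∈ Dspace E)
    (f : ℕ → X → ℝ) (hqc : ∀ n, Quasicontinuous E (f n))
    (hrep : ∀ n, ∀ᵐ x ∂m, F n x = f n x)
    (G : Lp ℝ 2 m) (hG : G ∈ Dspace E)
    (hconv : Filter.Tendsto (fun n => Dnorm E (F n - G)) Filter.atTop (nhds 0)) :
    ∃ g : X → ℝ, Quasicontinuous E g ∧ (∀ᵐ x ∂m, G x = g x) ∧
      ∃ φ : ℕ → ℕ, StrictMono φ ∧
        cap E {x : X | ¬ Filter.Tendsto (fun k => f (φ k) x) Filter.atTop (nhds (g x))} = 0 ∧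
        ∀ ε : ℝ, 0 < ε → ∃ U : Set X, IsOpen U ∧ cap E U ≤ ENNReal.ofReal ε ∧
          TendstoUniformlyOn (fun k => f (φ k)) g Filter.atTop Uᶜ := by
  classical
  obtain ⟨hc, hlsc, -, hlat, -⟩ := hE
  obtain ⟨h0, hneg⟩ := hsym
  -- Step 1: extract subsequence
  have hev : ∀ k : ℕ, ∀ᶠ n in atTop, Dnorm E (F n - G) < ENNReal.ofReal ((8⁻¹:ℝ)^k / 4) := by
    intro k
    refine hconv.eventually_lt_const ?_
    exact ENNReal.ofReal_pos.mpr (by positivity)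
  obtain ⟨φ, hφmono, hφ⟩ := extraction_forall_of_eventually hev
  -- Step 2: consecutive differences
  have hd : ∀ k, Dnorm E (F (φ (k+1)) - F (φ k)) ≤ ENNReal.ofReal ((8⁻¹:ℝ)^k / 2) := by
    intro k
    have heq : F (φ (k+1)) - F (φ k) = (F (φ (k+1)) - G) + -(F (φ k) - G) := by abel
    calc Dnorm E (F (φ (k+1)) - F (φ k))
        = Dnorm E ((F (φ (k+1)) - G) + -(F (φ k) - G)) := by rw [heq]
      _ ≤ Dnorm E (F (φ (k+1)) - G) + Dnorm E (-(F (φ k) - G)) := DF.Dnorm_add_le hc h0 _ _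
      _ = Dnorm E (F (φ (k+1)) - G) + Dnorm E (F (φ k) - G) := by rw [DF.Dnorm_neg hneg]
      _ ≤ ENNReal.ofReal ((8⁻¹:ℝ)^(k+1) / 4) + ENNReal.ofReal ((8⁻¹:ℝ)^k / 4) :=
          add_le_add (hφ (k+1)).le (hφ k).le
      _ ≤ ENNReal.ofReal ((8⁻¹:ℝ)^k / 2) := by
          rw [← ENNReal.ofReal_add (by positivity) (by positivity)]
          refine ENNReal.ofReal_le_ofReal ?_
          have h1 : (8⁻¹:ℝ)^(k+1) ≤ (8⁻¹:ℝ)^k := by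
            refine pow_le_pow_of_le_one (by norm_num) (by norm_num) (by omega)
          linarith
  -- Step 3: scaled bounds
  have hsc : ∀ k, Dnorm E (((2:ℝ)^k) • (F (φ (k+1)) - F (φ k)))
      ≤ ENNReal.ofReal ((4⁻¹:ℝ)^k / 2) := by
    intro k
    calc Dnorm E (((2:ℝ)^k) • (F (φ (k+1)) - F (φ k)))
        ≤ ENNReal.ofReal ((2:ℝ)^k) * Dnorm E (F (φ (k+1)) - F (φ k)) :=
          DF.Dnorm_smul_le hc h0 (by positivity) _
      _ ≤ ENNReal.ofReal ((2:ℝ)^k) * ENNReal.ofReal ((8⁻¹:ℝ)^k / 2) := by gcongr; exact hd k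
      _ = ENNReal.ofReal ((2:ℝ)^k * ((8⁻¹:ℝ)^k / 2)) := (ENNReal.ofReal_mul (by positivity)).symm
      _ = ENNReal.ofReal ((4⁻¹:ℝ)^k / 2) := by
          congr 1
          rw [mul_div_assoc', ← mul_pow]
          norm_num
  have hsc' : ∀ k, Dnorm E (((2:ℝ)^k) • (F (φ k) - F (φ (k+1))))
      ≤ ENNReal.ofReal ((4⁻¹:ℝ)^k / 2) := by
    intro k
    have : F (φ k) - F (φ (k+1)) = -(F (φ (k+1)) - F (φ k)) := by abel
    rw [this, smul_neg, DF.Dnorm_neg hneg]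
    exact hsc k
  -- Step 4: representatives of the differences
  have hgkqc : ∀ k, Quasicontinuous E (fun x => f (φ (k+1)) x - f (φ k) x) := fun k =>
    DF.Quasicontinuous.sub' hc h0 hlat (hqc _) (hqc _)
  have hgkqc' : ∀ k, Quasicontinuous E (fun x => f (φ k) x - f (φ (k+1)) x) := fun k =>
    DF.Quasicontinuous.sub' hc h0 hlat (hqc _) (hqc _)
  have hgkrep : ∀ k, ∀ᵐ x ∂m, (F (φ (k+1)) - F (φ k)) x = f (φ (k+1)) x - f (φ k) x := by
    intro k
    filter_upwards [hrep (φ (k+1)), hrep (φ k), Lp.coeFn_sub (F (φ (k+1))) (F (φ k))]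
      with x h1 h2 h3
    rw [h3, Pi.sub_apply, h1, h2]
  have hgkrep' : ∀ k, ∀ᵐ x ∂m, (F (φ k) - F (φ (k+1))) x = f (φ k) x - f (φ (k+1)) x := by
    intro k
    filter_upwards [hrep (φ (k+1)), hrep (φ k), Lp.coeFn_sub (F (φ k)) (F (φ (k+1)))]
      with x h1 h2 h3
    rw [h3, Pi.sub_apply, h1, h2]
  -- Step 5: capacity of bad sets
  set A : ℕ → Set X := fun k => {x | (2⁻¹:ℝ)^k < |f (φ (k+1)) x - f (φ k) x|} with hA
  have hAk : ∀ k, cap E (A k) ≤ ENNReal.ofReal (2 * (4⁻¹:ℝ)^k) := by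
    intro k
    have hlam : (0:ℝ) < (2⁻¹:ℝ)^k := by positivity
    have hinv : ((2⁻¹:ℝ)^k)⁻¹ = (2:ℝ)^k := by
      rw [← inv_pow, inv_inv]
    have hsetEq : A k = {x | (2⁻¹:ℝ)^k < f (φ (k+1)) x - f (φ k) x}
        ∪ {x | (2⁻¹:ℝ)^k < f (φ k) x - f (φ (k+1)) x} := by
      ext x
      simp only [hA, Set.mem_setOf_eq, Set.mem_union, lt_abs, neg_sub]
    have hhalf : (0:ℝ) < (4⁻¹:ℝ)^k / 2 := by positivity
    have hB1 : cap E {x | (2⁻¹:ℝ)^k < f (φ (k+1)) x - f (φ k) x}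
        ≤ ENNReal.ofReal ((4⁻¹:ℝ)^k) := by
      have := DF.cap_setOf_lt_le hc h0 hlat (hgkqc k) (hgkrep k) hlam hhalf
      rw [hinv] at this
      refine le_trans this ?_
      refine le_trans (add_le_add (hsc k) le_rfl) ?_
      rw [← ENNReal.ofReal_add (by positivity) (by positivity)]
      refine ENNReal.ofReal_le_ofReal (by linarith)
    have hB2 : cap E {x | (2⁻¹:ℝ)^k < f (φ k) x - f (φ (k+1)) x}
        ≤ ENNReal.ofReal ((4⁻¹:ℝ)^k) := by
      have := DF.cap_setOf_lt_le hc h0 hlat (hgkqc' k) (hgkrep' k) hlam hhalf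
      rw [hinv] at this
      refine le_trans this ?_
      refine le_trans (add_le_add (hsc' k) le_rfl) ?_
      rw [← ENNReal.ofReal_add (by positivity) (by positivity)]
      refine ENNReal.ofReal_le_ofReal (by linarith)
    rw [hsetEq]
    calc cap E _ ≤ _ + _ := DF.cap_union_le hc h0 hlat _ _
      _ ≤ ENNReal.ofReal ((4⁻¹:ℝ)^k) + ENNReal.ofReal ((4⁻¹:ℝ)^k) := add_le_add hB1 hB2
      _ = ENNReal.ofReal (2 * (4⁻¹:ℝ)^k) := by
          rw [← ENNReal.ofReal_add (by positivity) (by positivity)]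
          congr 1
          ring
  -- Step 6: tail unions
  set T : ℕ → Set X := fun N => ⋃ j, A (N + j) with hT
  have hTcap : ∀ N, cap E (T N) ≤ ENNReal.ofReal (3 * (4⁻¹:ℝ)^N) := by
    intro N
    have hsummable : Summable (fun j => 2 * (4⁻¹:ℝ)^N * (4⁻¹:ℝ)^j) :=
      (summable_geometric_of_lt_one (by norm_num) (by norm_num)).mul_left _
    calc cap E (T N) ≤ ∑' j, cap E (A (N + j)) :=
        DF.cap_iUnion_le hc h0 hlat hlsc _
      _ ≤ ∑' j, ENNReal.ofReal (2 * (4⁻¹:ℝ)^(N + j)) := ENNReal.tsum_le_tsum fun j => hAk _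
      _ = ∑' j, ENNReal.ofReal (2 * (4⁻¹:ℝ)^N * (4⁻¹:ℝ)^j) := by
          congr 1; ext j; rw [pow_add]; ring_nf
      _ = ENNReal.ofReal (∑' j, 2 * (4⁻¹:ℝ)^N * (4⁻¹:ℝ)^j) :=
          (ENNReal.ofReal_tsum_of_nonneg (fun j => by positivity) hsummable).symm
      _ ≤ ENNReal.ofReal (3 * (4⁻¹:ℝ)^N) := by
          refine ENNReal.ofReal_le_ofReal ?_
          rw [tsum_mul_left, tsum_geometric_of_lt_one (by norm_num) (by norm_num)]
          norm_num
          nlinarith [pow_nonneg (by norm_num : (0:ℝ) ≤ 4⁻¹) N]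
  -- Step 7: pointwise smallness off T N
  have hsmall : ∀ N x, x ∉ T N → ∀ k, N ≤ k →
      |f (φ (k+1)) x - f (φ k) x| ≤ (2⁻¹:ℝ)^k := by
    intro N x hx k hk
    have : x ∉ A k := by
      intro hmem
      refine hx ?_
      rw [hT]
      refine Set.mem_iUnion.mpr ⟨k - N, ?_⟩
      rwa [Nat.add_sub_cancel' hk]
    simpa [hA, not_lt] using this
  -- Step 8: definition of the limit function and convergence off T N
  set g : X → ℝ := fun x => limUnder atTop (fun k => f (φ k) x) with hg
  have hgeom2 : ∀ N : ℕ, Summable (fun j : ℕ => (2⁻¹:ℝ)^(N + j)) := by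
    intro N
    simp only [pow_add]
    exact (summable_geometric_of_lt_one (by norm_num) (by norm_num)).mul_left _
  have htend : ∀ N, ∀ x, x ∉ T N → Tendsto (fun k => f (φ k) x) atTop (nhds (g x)) := by
    intro N x hx
    set y : ℕ → ℝ := fun k => f (φ k) x with hy
    have hb := hsmall N x hx
    have habs : Summable (fun j : ℕ => |y (N + j + 1) - y (N + j)|) := by
      refine Summable.of_nonneg_of_le (fun j => abs_nonneg _) (fun j => ?_) (hgeom2 N)
      exact hb (N + j) (Nat.le_add_right _ _)
    have hsum : Summable (fun j : ℕ => y (N + j + 1) - y (N + j)) := habs.of_abs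
    have htel : ∀ n : ℕ, ∑ j ∈ Finset.range n, (y (N + j + 1) - y (N + j)) = y (N + n) - y N :=
      fun n => Finset.sum_range_sub (fun i => y (N + i)) n
    have hps : Tendsto (fun n => y (N + n) - y N) atTop
        (nhds (∑' j, (y (N + j + 1) - y (N + j)))) := by
      have := hsum.hasSum.tendsto_sum_nat
      simpa only [htel] using this
    have hshift : Tendsto (fun n => y (N + n)) atTop
        (nhds ((∑' j, (y (N + j + 1) - y (N + j))) + y N)) := by
      have := hps.add_const (y N)
      simpa using this
    have hyy : Tendsto y atTop (nhds ((∑' j, (y (N + j + 1) - y (N + j))) + y N)) := by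
      rw [← tendsto_add_atTop_iff_nat N]
      have hcomm : (fun n => y (n + N)) = fun n => y (N + n) := by
        ext n; rw [Nat.add_comm]
      rw [hcomm]
      exact hshift
    have hlim : g x = (∑' j, (y (N + j + 1) - y (N + j))) + y N := hyy.limUnder_eq
    rw [hlim]
    exact hyy
  -- Step 9: uniform estimate off T N
  have hunif : ∀ N x, x ∉ T N → ∀ k, N ≤ k → |g x - f (φ k) x| ≤ 2 * (2⁻¹:ℝ)^k := by
    intro N x hx k hk
    set y : ℕ → ℝ := fun k => f (φ k) x with hy
    have hb := hsmall N x hx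
    have hdiff : ∀ j, k ≤ j → |y j - y k| ≤ 2 * (2⁻¹:ℝ)^k := by
      intro j hj
      have htel : y j - y k = ∑ l ∈ Finset.Ico k j, (y (l + 1) - y l) := by
        rw [Finset.sum_Ico_eq_sub _ hj, Finset.sum_range_sub, Finset.sum_range_sub]
        ring
      rw [htel]
      calc |∑ l ∈ Finset.Ico k j, (y (l + 1) - y l)|
          ≤ ∑ l ∈ Finset.Ico k j, |y (l + 1) - y l| := Finset.abs_sum_le_sum_abs _ _
        _ ≤ ∑ l ∈ Finset.Ico k j, (2⁻¹:ℝ)^l := by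
            refine Finset.sum_le_sum fun l hl => ?_
            have hkl : k ≤ l := (Finset.mem_Ico.mp hl).1
            exact hb l (le_trans hk hkl)
        _ = ∑ i ∈ Finset.range (j - k), (2⁻¹:ℝ)^(k + i) := Finset.sum_Ico_eq_sum_range _ _ _
        _ ≤ ∑' i : ℕ, (2⁻¹:ℝ)^(k + i) :=
            Summable.sum_le_tsum _ (fun i _ => by positivity) (hgeom2 k)
        _ = 2 * (2⁻¹:ℝ)^k := by
            simp only [pow_add]
            rw [tsum_mul_left, tsum_geometric_of_lt_one (by norm_num) (by norm_num)]
            norm_num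
            ring
    have hlimit : Tendsto (fun j => |y j - y k|) atTop (nhds (|g x - y k|)) := by
      have h1 : Tendsto y atTop (nhds (g x)) := htend N x hx
      exact ((h1.sub tendsto_const_nhds).abs)
    refine le_of_tendsto hlimit ?_
    filter_upwards [eventually_ge_atTop k] with j hj
    exact hdiff j hj
  -- Step 10: the polar set Z
  set Z : Set X := ⋂ N, T N with hZ
  have hZcap : cap E Z = 0 := by
    refine le_antisymm ?_ zero_le
    refine ENNReal.le_of_forall_pos_le_add fun ε hε _ => ?_
    rw [zero_add]
    have hεpos : (0:ℝ) < (ε:ℝ) := hε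
    have : ∀ᶠ N in atTop, 3 * (4⁻¹:ℝ)^N < (ε:ℝ) := by
      have h4 : Tendsto (fun N : ℕ => 3 * (4⁻¹:ℝ)^N) atTop (nhds 0) := by
        have := tendsto_pow_atTop_nhds_zero_of_lt_one (by norm_num : (0:ℝ) ≤ 4⁻¹)
          (by norm_num : (4⁻¹:ℝ) < 1)
        simpa using this.const_mul 3
      exact h4.eventually_lt_const hεpos
    obtain ⟨N, hN⟩ := this.exists
    calc cap E Z ≤ cap E (T N) := DF.cap_mono (Set.iInter_subset _ N)
      _ ≤ ENNReal.ofReal (3 * (4⁻¹:ℝ)^N) := hTcap N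
      _ ≤ ENNReal.ofReal (ε:ℝ) := ENNReal.ofReal_le_ofReal hN.le
      _ = (ε : ℝ≥0∞) := ENNReal.ofReal_coe_nnreal
  -- Step 11: divergence set is polar
  have hdivsub : {x : X | ¬ Tendsto (fun k => f (φ k) x) atTop (nhds (g x))} ⊆ Z := by
    intro x hx
    by_contra hxZ
    obtain ⟨N, hN⟩ : ∃ N, x ∉ T N := by
      by_contra hall
      push_neg at hall
      exact hxZ (Set.mem_iInter.mpr hall)
    exact hx (htend N x hN)
  have hdiv : cap E {x : X | ¬ Tendsto (fun k => f (φ k) x) atTop (nhds (g x))} = 0 :=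
    le_antisymm (le_trans (DF.cap_mono hdivsub) hZcap.le) zero_le
  -- Step 12: Z is m-null
  have hmZ : m Z = 0 := by
    refine le_antisymm ?_ zero_le
    refine ENNReal.le_of_forall_pos_le_add fun ε hε _ => ?_
    rw [zero_add]
    have hεpos : (0:ℝ) < (ε:ℝ) := hε
    set δ : ℝ := Real.sqrt (ε:ℝ) with hδ
    have hδpos : 0 < δ := Real.sqrt_pos.mpr hεpos
    have hlt : cap E Z < ENNReal.ofReal δ := by
      rw [hZcap]
      exact ENNReal.ofReal_pos.mpr hδpos
    obtain ⟨u, V, hVopen, hZV, haeV, hDu⟩ := DF.exists_admissible hlt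
    have hnorm : ENNReal.ofReal ‖u‖ ≤ ENNReal.ofReal δ :=
      le_trans (DF.ofReal_norm_le_Dnorm u) hDu.le
    calc m Z ≤ m V := measure_mono hZV
      _ ≤ (ENNReal.ofReal ‖u‖)^2 := DF.meas_le_sq_norm hVopen.measurableSet haeV
      _ ≤ (ENNReal.ofReal δ)^2 := by gcongr
      _ = ENNReal.ofReal (δ^2) := (ENNReal.ofReal_pow (by positivity) 2).symm
      _ = ENNReal.ofReal (ε:ℝ) := by rw [hδ, Real.sq_sqrt hεpos.le]
      _ = (ε : ℝ≥0∞) := ENNReal.ofReal_coe_nnreal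
  -- Step 13: G = g a.e.
  have hGg : ∀ᵐ x ∂m, G x = g x := by
    have hFG : Tendsto (fun k => F (φ k)) atTop (nhds G) := by
      rw [tendsto_iff_norm_sub_tendsto_zero]
      refine squeeze_zero (g := fun k => (8⁻¹:ℝ)^k / 4) (fun k => norm_nonneg _)
        (fun k => ?_) ?_
      · have h1 : ENNReal.ofReal ‖F (φ k) - G‖ < ENNReal.ofReal ((8⁻¹:ℝ)^k / 4) :=
          lt_of_le_of_lt (DF.ofReal_norm_le_Dnorm _) (hφ k)
        have := (ENNReal.ofReal_lt_ofReal_iff (by positivity)).mp h1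
        linarith
      · have := tendsto_pow_atTop_nhds_zero_of_lt_one (by norm_num : (0:ℝ) ≤ 8⁻¹)
          (by norm_num : (8⁻¹:ℝ) < 1)
        simpa using this.div_const 4
    obtain ⟨ns, hns, hae⟩ := DF.exists_ae_tendsto hFG
    have haerep : ∀ᵐ x ∂m, ∀ n, F n x = f n x := (MeasureTheory.ae_all_iff).mpr hrep
    have haeZ : ∀ᵐ x ∂m, x ∉ Z := measure_eq_zero_iff_ae_notMem.mp hmZ
    filter_upwards [hae, haerep, haeZ] with x h1 h2 h3
    obtain ⟨N, hN⟩ : ∃ N, x ∉ T N := by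
      by_contra hall
      push_neg at hall
      exact h3 (Set.mem_iInter.mpr hall)
    have ht := htend N x hN
    have ht2 : Tendsto (fun i => f (φ (ns i)) x) atTop (nhds (g x)) :=
      ht.comp hns.tendsto_atTop
    have ht3 : Tendsto (fun i => F (φ (ns i)) x) atTop (nhds (g x)) :=
      ht2.congr fun i => (h2 (φ (ns i))).symm
    exact tendsto_nhds_unique h1 ht3
  -- Step 14: quasi-uniform convergence machinery
  have hkey : ∀ N (V : Set X), T N ⊆ V →
      TendstoUniformlyOn (fun k => f (φ k)) g atTop Vᶜ := by
    intro N V hTV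
    rw [Metric.tendstoUniformlyOn_iff]
    intro δ hδ
    have h2 : Tendsto (fun k : ℕ => 2 * (2⁻¹:ℝ)^k) atTop (nhds 0) := by
      have := tendsto_pow_atTop_nhds_zero_of_lt_one (by norm_num : (0:ℝ) ≤ 2⁻¹)
        (by norm_num : (2⁻¹:ℝ) < 1)
      simpa using this.const_mul 2
    filter_upwards [h2.eventually_lt_const hδ, eventually_ge_atTop N] with k hk1 hk2 x hx
    have hxT : x ∉ T N := fun hmem => hx (hTV hmem)
    rw [Real.dist_eq]
    exact lt_of_le_of_lt (hunif N x hxT k hk2) hk1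
  have hquasiunif : ∀ ε : ℝ, 0 < ε → ∃ U : Set X, IsOpen U ∧ cap E U ≤ ENNReal.ofReal ε ∧
      TendstoUniformlyOn (fun k => f (φ k)) g atTop Uᶜ := by
    intro ε hε
    have : ∀ᶠ N in atTop, 3 * (4⁻¹:ℝ)^N < ε := by
      have h4 : Tendsto (fun N : ℕ => 3 * (4⁻¹:ℝ)^N) atTop (nhds 0) := by
        have := tendsto_pow_atTop_nhds_zero_of_lt_one (by norm_num : (0:ℝ) ≤ 4⁻¹)
          (by norm_num : (4⁻¹:ℝ) < 1)
        simpa using this.const_mul 3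
      exact h4.eventually_lt_const hε
    obtain ⟨N, hN⟩ := this.exists
    have hTlt : cap E (T N) < ENNReal.ofReal ε :=
      lt_of_le_of_lt (hTcap N) (ENNReal.ofReal_lt_ofReal_iff hε |>.mpr hN)
    obtain ⟨u, V, hVopen, hTV, haeV, hDu⟩ := DF.exists_admissible hTlt
    refine ⟨V, hVopen, ?_, hkey N V hTV⟩
    exact le_trans (DF.cap_le_Dnorm hVopen subset_rfl haeV) hDu.le
  -- Step 15: g is quasicontinuous
  have hgqc : Quasicontinuous E g := by
    intro ε hε
    have : ∀ᶠ N in atTop, 3 * (4⁻¹:ℝ)^N < ε / 2 := by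
      have h4 : Tendsto (fun N : ℕ => 3 * (4⁻¹:ℝ)^N) atTop (nhds 0) := by
        have := tendsto_pow_atTop_nhds_zero_of_lt_one (by norm_num : (0:ℝ) ≤ 4⁻¹)
          (by norm_num : (4⁻¹:ℝ) < 1)
        simpa using this.const_mul 3
      exact h4.eventually_lt_const (by linarith)
    obtain ⟨N, hN⟩ := this.exists
    have hTlt : cap E (T N) < ENNReal.ofReal (ε / 2) :=
      lt_of_le_of_lt (hTcap N) (ENNReal.ofReal_lt_ofReal_iff (by linarith) |>.mpr hN)
    obtain ⟨u, V, hVopen, hTV, haeV, hDu⟩ := DF.exists_admissible hTlt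
    have hVcap : cap E V ≤ ENNReal.ofReal (ε / 2) :=
      le_trans (DF.cap_le_Dnorm hVopen subset_rfl haeV) hDu.le
    have hOk : ∀ k : ℕ, ∃ O : Set X, IsOpen O ∧
        cap E O ≤ ENNReal.ofReal (ε / 4 * (2⁻¹:ℝ)^k) ∧ ContinuousOn (f (φ k)) Oᶜ :=
      fun k => hqc (φ k) (ε / 4 * (2⁻¹:ℝ)^k) (by positivity)
    choose O hOopen hOcap hOcont using hOk
    refine ⟨V ∪ ⋃ k, O k, hVopen.union (isOpen_iUnion hOopen), ?_, ?_⟩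
    · have hsum : Summable (fun k : ℕ => ε / 4 * (2⁻¹:ℝ)^k) :=
        (summable_geometric_of_lt_one (by norm_num) (by norm_num)).mul_left _
      calc cap E (V ∪ ⋃ k, O k) ≤ cap E V + cap E (⋃ k, O k) :=
          DF.cap_union_le hc h0 hlat _ _
        _ ≤ ENNReal.ofReal (ε / 2) + ∑' k, cap E (O k) :=
            add_le_add hVcap (DF.cap_iUnion_le hc h0 hlat hlsc O)
        _ ≤ ENNReal.ofReal (ε / 2) + ∑' k, ENNReal.ofReal (ε / 4 * (2⁻¹:ℝ)^k) :=
            add_le_add le_rfl (ENNReal.tsum_le_tsum hOcap)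
        _ = ENNReal.ofReal (ε / 2) + ENNReal.ofReal (∑' k, ε / 4 * (2⁻¹:ℝ)^k) := by
            rw [ENNReal.ofReal_tsum_of_nonneg (fun k => by positivity) hsum]
        _ ≤ ENNReal.ofReal ε := by
            have htsum : (∑' k : ℕ, ε / 4 * (2⁻¹:ℝ)^k) = ε / 2 := by
              rw [tsum_mul_left, tsum_geometric_of_lt_one (by norm_num) (by norm_num)]
              norm_num
              ring
            rw [htsum, ← ENNReal.ofReal_add (by linarith) (by linarith)]
            exact ENNReal.ofReal_le_ofReal (by linarith)
    · have huni : TendstoUniformlyOn (fun k => f (φ k)) g atTop (V ∪ ⋃ k, O k)ᶜ :=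
        (hkey N V hTV).mono (Set.compl_subset_compl.mpr Set.subset_union_left)
      refine huni.continuousOn ?_
      refine Filter.Eventually.frequently ?_
      filter_upwards with k
      refine (hOcont k).mono ?_
      refine Set.compl_subset_compl.mpr ?_
      exact le_trans (Set.subset_iUnion O k) Set.subset_union_right
  exact ⟨g, hgqc, hGg, φ, hφmono, hdiv, hquasiunif⟩


end
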